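/- arXiv:math/0701722 — 3 statements merged into one kernel-verified Lean document; each statement's English description precedes it below -/
import Mathlib

section
/- Let G be a group acting transitively on a set Ω, let c ∈ G be a central element of order 2 generating a normal subgroup C, and let Ḡ ≤ G be a complement of C (so G = C × Ḡ internally) such that Ḡ has exactly two orbits on Ω. If H ≤ Ḡ is a subgroup of index 2 whose image acts transitively on the set of C-orbits of Ω, and g ∈ Ḡ \ H, then K = ⟨H, c·g⟩ is a complement of C in G that acts transitively on Ω. -/
theorem stmt_12 {G : Type*} [Group G] {Ω : Type*} [MulAction G Ω]
    (htrans : MulAction.IsPretransitive G Ω)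
    (c : G) (hc : c ∈ Subgroup.center G) (hc2 : orderOf c = 2)
    (Gbar : Subgroup G)
    (hcomp₁ : Subgroup.zpowers c ⊓ Gbar = ⊥)
    (hcomp₂ : Subgroup.zpowers c ⊔ Gbar = ⊤)
    (horb : Nat.card (MulAction.orbitRel.Quotient Gbar Ω) = 2)
    (H : Subgroup G) (hHG : H ≤ Gbar) (hHidx : H.relIndex Gbar = 2)
    (hHtrans : ∀ x y : Ω, ∃ h ∈ H, h • x = y ∨ c • (h • x) = y)
    (g : G) (hg : g ∈ Gbar) (hgH : g ∉ H) :
    Subgroup.zpowers c ⊓ (H ⊔ Subgroup.zpowers (c * g)) = ⊥ ∧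
    Subgroup.zpowers c ⊔ (H ⊔ Subgroup.zpowers (c * g)) = ⊤ ∧
    ∀ x y : Ω, ∃ k ∈ H ⊔ Subgroup.zpowers (c * g), k • x = y := by
  have hcc : ∀ a : G, c * a = a * c := fun a => (Subgroup.mem_center_iff.mp hc a).symm
  have hcsq : c * c = 1 := by
    have := pow_orderOf_eq_one c
    rwa [hc2, pow_two] at this
  have hccl : ∀ a b : G, a * (c * b) = c * (a * b) := by
    intro a b; rw [← mul_assoc, ← hcc, mul_assoc]
  have hcl : ∀ b : G, c * (c * b) = b := by
    intro b; rw [← mul_assoc, hcsq, one_mul]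
  have hc1 : c ≠ 1 := by
    intro h
    rw [h, orderOf_one] at hc2
    omega
  have hcinv : c⁻¹ = c := by
    rw [eq_comm, eq_inv_iff_mul_eq_one, hcsq]
  have hcGbar : c ∉ Gbar := by
    intro h
    have : c ∈ Subgroup.zpowers c ⊓ Gbar := ⟨Subgroup.mem_zpowers c, h⟩
    rw [hcomp₁] at this
    exact hc1 this
  have parity : ∀ x ∈ Gbar, ∀ y ∈ Gbar, (x * y ∈ H ↔ (x ∈ H ↔ y ∈ H)) := by
    intro x hx y hy
    have h2 : (H.subgroupOf Gbar).index = 2 := hHidx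
    have := Subgroup.mul_mem_iff_of_index_two h2 (a := ⟨x, hx⟩) (b := ⟨y, hy⟩)
    simpa [Subgroup.mem_subgroupOf] using this
  have hginv : g⁻¹ ∉ H := fun h => hgH (by simpa using H.inv_mem h)
  have hginvG : g⁻¹ ∈ Gbar := Gbar.inv_mem hg
  have hzc : ∀ x ∈ Subgroup.zpowers c, x = 1 ∨ x = c := by
    intro x hx
    obtain ⟨n, rfl⟩ := Subgroup.mem_zpowers_iff.mp hx
    have h2 : (c ^ (2:ℤ)) = 1 := by rw [zpow_two, hcsq]
    rcases Int.even_or_odd n with ⟨k, hk⟩ | ⟨k, hk⟩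
    · left
      rw [hk, ← two_mul, zpow_mul, h2, one_zpow]
    · right
      rw [hk, zpow_add, zpow_mul, h2, one_zpow, one_mul, zpow_one]
  -- the subgroup S ⊇ H ⊔ zpowers (c*g), used to show c ∉ K
  let S : Subgroup G :=
    { carrier := {x | x ∈ H ∨ ∃ u ∈ H, x = c * g * u}
      one_mem' := Or.inl H.one_mem
      mul_mem' := by
        rintro a b (ha | ⟨u, hu, rfl⟩) (hb | ⟨v, hv, rfl⟩)
        · exact Or.inl (H.mul_mem ha hb)
        · right
          refine ⟨g⁻¹ * a * g * v, H.mul_mem ?_ hv, ?_⟩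
          · rw [parity _ (Gbar.mul_mem hginvG (hHG ha)) _ hg,
              parity _ hginvG _ (hHG ha)]
            tauto
          · simp only [mul_assoc, hccl, hcl]
            group
        · right
          exact ⟨u * b, H.mul_mem hu hb, by group⟩
        · left
          have : c * g * u * (c * g * v) = (g * u * g) * v := by
            simp only [mul_assoc, hccl, hcl]
          rw [this]
          refine H.mul_mem ?_ hv
          rw [parity _ (Gbar.mul_mem hg (hHG hu)) _ hg,
            parity _ hg _ (hHG hu)]
          tauto
      inv_mem' := by
        rintro a (ha | ⟨u, hu, rfl⟩)
        · exact Or.inl (H.inv_mem ha)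
        · right
          refine ⟨g⁻¹ * u⁻¹ * g⁻¹, ?_, ?_⟩
          · rw [parity _ (Gbar.mul_mem hginvG (H.inv_mem hu |> hHG)) _ hginvG,
              parity _ hginvG _ (H.inv_mem hu |> hHG)]
            have : u⁻¹ ∈ H := H.inv_mem hu
            tauto
          · rw [mul_inv_rev, mul_inv_rev, hcinv]
            simp only [mul_assoc, mul_inv_cancel_left]
            rw [← hcc, hccl]
    }
  have hKS : H ⊔ Subgroup.zpowers (c * g) ≤ S := by
    refine sup_le (fun x hx => Or.inl hx) ?_
    rw [Subgroup.zpowers_le]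
    exact Or.inr ⟨1, H.one_mem, by group⟩
  have hcK : c ∉ H ⊔ Subgroup.zpowers (c * g) := by
    intro hck
    rcases hKS hck with h | ⟨u, hu, hcu⟩
    · exact hcGbar (hHG h)
    · have h1 : g * u = 1 := by
        apply mul_left_cancel (a := c)
        rw [mul_one, ← mul_assoc]
        exact hcu.symm
      exact hgH ((eq_inv_of_mul_eq_one_left h1) ▸ H.inv_mem hu)
  have hnorm : (Subgroup.zpowers c).Normal := by
    constructor
    intro n hn x
    have hxn : x * n * x⁻¹ = n := by
      rcases hzc n hn with rfl | rfl
      · simp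
      · rw [← hcc, mul_assoc]
        simp
    rw [hxn]
    exact hn
  haveI := hnorm
  -- c swaps the two Gbar-orbits
  have hswap : ∀ w : Ω, ¬ ∃ b ∈ Gbar, b • w = c • w := by
    rintro w ⟨b, hb, hbw⟩
    have horbit : ∀ u : Ω, ∃ b' ∈ Gbar, b' • w = u := by
      intro u
      obtain ⟨x, hxw⟩ := htrans.exists_smul_eq w u
      have hxtop : x ∈ ((Subgroup.zpowers c ⊔ Gbar : Subgroup G) : Set G) := by
        rw [hcomp₂]; trivial
      rw [Subgroup.normal_mul] at hxtop
      obtain ⟨z, hz, b', hb', rfl⟩ := hxtop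
      rcases hzc z hz with rfl | rfl
      · exact ⟨b', hb', by simpa using hxw⟩
      · refine ⟨b' * b, Gbar.mul_mem hb' hb, ?_⟩
        rw [mul_smul, hbw, ← mul_smul, ← hcc, mul_smul]
        simpa [mul_smul] using hxw
    have hsub : Subsingleton (MulAction.orbitRel.Quotient Gbar Ω) := by
      constructor
      intro p q
      refine Quotient.inductionOn₂' p q (fun u v => ?_)
      obtain ⟨b1, hb1, hbu⟩ := horbit u
      obtain ⟨b2, hb2, hbv⟩ := horbit v
      apply Quotient.sound'
      rw [MulAction.orbitRel_apply]
      refine ⟨⟨b1 * b2⁻¹, Gbar.mul_mem hb1 (Gbar.inv_mem hb2)⟩, ?_⟩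
      show (b1 * b2⁻¹) • v = u
      rw [mul_smul, ← hbv, inv_smul_smul, hbu]
    obtain ⟨hne, -⟩ := Nat.card_ne_zero.mp
      (show Nat.card (MulAction.orbitRel.Quotient Gbar Ω) ≠ 0 by omega)
    have h1 : Nat.card (MulAction.orbitRel.Quotient Gbar Ω) = 1 :=
      Nat.card_eq_one_iff_unique.mpr ⟨hsub, hne⟩
    omega
  refine ⟨?_, ?_, ?_⟩
  · rw [Subgroup.eq_bot_iff_forall]
    rintro x ⟨hx1, hx2⟩
    rcases hzc x hx1 with rfl | rfl
    · rfl
    · exact absurd hx2 hcK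
  · rw [eq_top_iff, ← hcomp₂]
    refine sup_le le_sup_left ?_
    intro b hb
    by_cases hbH : b ∈ H
    · exact Subgroup.mem_sup_right (Subgroup.mem_sup_left hbH)
    · have hgb : g⁻¹ * b ∈ H := by
        rw [parity _ hginvG _ hb]
        tauto
      have hbeq : b = c * ((c * g) * (g⁻¹ * b)) := by
        simp only [mul_assoc, hcl, mul_inv_cancel_left]
      rw [hbeq]
      exact mul_mem (Subgroup.mem_sup_left (Subgroup.mem_zpowers c))
        (Subgroup.mem_sup_right (mul_mem
          (Subgroup.mem_sup_right (Subgroup.mem_zpowers (c * g)))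
          (Subgroup.mem_sup_left hgb)))
  · intro x y
    obtain ⟨h, hh, hcase⟩ := hHtrans x y
    rcases hcase with h1 | h1
    · exact ⟨h, Subgroup.mem_sup_left hh, h1⟩
    · obtain ⟨h', hh', hcase'⟩ := hHtrans x (g⁻¹ • (h • x))
      rcases hcase' with h2 | h2
      · refine ⟨c * g * h',
          mul_mem (Subgroup.mem_sup_right (Subgroup.mem_zpowers _))
            (Subgroup.mem_sup_left hh'), ?_⟩
        rw [mul_smul, mul_smul, h2, smul_inv_smul]
        exact h1
      · exfalso
        apply hswap ((g * h') • x)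
        refine ⟨h * (h'⁻¹ * g⁻¹), Gbar.mul_mem (hHG hh)
          (Gbar.mul_mem (Gbar.inv_mem (hHG hh')) hginvG), ?_⟩
        have e2 : c • ((g * h') • x) = g • (c • (h' • x)) := by
          rw [← mul_smul, ← mul_smul, ← mul_smul, ← hcc, mul_assoc]
        show (h * (h'⁻¹ * g⁻¹)) • ((g * h') • x) = c • ((g * h') • x)
        rw [e2, h2, smul_inv_smul]
        simp only [mul_smul, inv_smul_smul]
end

section
/- Let G be a group acting transitively on Ω, let C = ⟨c⟩ ⊴ G be a normal subgroup of order 2 acting without fixed points on Ω, let Ḡ be a complement of C with exactly two orbits on Ω, and let K be a complement of C in G that acts transitively on Ω. Then K ∩ Ḡ has index 2 in both K and Ḡ, has exactly two orbits on Ω, and its image in G/C acts transitively on the set of C-orbits. -/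
open Pointwise


theorem stmt_13 {G : Type*} [Group G] {Ω : Type*} [MulAction G Ω]
    (htrans : MulAction.IsPretransitive G Ω)
    (c : G) (hc2 : orderOf c = 2) (hNormal : (Subgroup.zpowers c).Normal)
    (hsemireg : ∀ x : Ω, c • x ≠ x)
    (Gbar K : Subgroup G)
    (hGbar₁ : Subgroup.zpowers c ⊓ Gbar = ⊥)
    (hGbar₂ : Subgroup.zpowers c ⊔ Gbar = ⊤)
    (horb : Nat.card (MulAction.orbitRel.Quotient Gbar Ω) = 2)
    (hK₁ : Subgroup.zpowers c ⊓ K = ⊥)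
    (hK₂ : Subgroup.zpowers c ⊔ K = ⊤)
    (hKtrans : ∀ x y : Ω, ∃ k ∈ K, k • x = y) :
    (K ⊓ Gbar).relIndex K = 2 ∧
    (K ⊓ Gbar).relIndex Gbar = 2 ∧
    Nat.card (MulAction.orbitRel.Quotient ↥(K ⊓ Gbar) Ω) = 2 ∧
    ∀ x y : Ω, ∃ h ∈ K ⊓ Gbar, h • x = y ∨ h • x = c • y := by
  classical
  haveI := hNormal
  have hc1 : c ≠ 1 := by
    intro h; rw [h, orderOf_one] at hc2; omega
  have hcsq : c * c = 1 := by
    have := pow_orderOf_eq_one c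
    rwa [hc2, pow_two] at this
  have hzp : ∀ a : G, a ∈ Subgroup.zpowers c → a = 1 ∨ a = c := by
    rintro a ⟨n, hn⟩
    replace hn : c ^ n = a := hn
    have h2 : c ^ (2 : ℤ) = 1 := by
      rw [show (2 : ℤ) = ((2 : ℕ) : ℤ) by norm_num, zpow_natCast, pow_two, hcsq]
    rcases Int.even_or_odd n with ⟨m, hm⟩ | ⟨m, hm⟩
    · left; rw [← hn, hm, ← two_mul, zpow_mul, h2, one_zpow]
    · right; rw [← hn, hm, zpow_add, zpow_mul, h2, one_zpow, one_mul, zpow_one]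
  have hcomm : ∀ g : G, c * g = g * c := by
    intro g
    have h := hNormal.conj_mem c (Subgroup.mem_zpowers c) g
    rcases hzp _ h with h1 | h1
    · exfalso
      apply hc1
      have : c = g⁻¹ * (g * c * g⁻¹) * g := by group
      rw [h1] at this
      simpa using this
    · have : g * c = (g * c * g⁻¹) * g := by group
      rw [h1] at this
      rw [this]
  have hdec : ∀ (H : Subgroup G), Subgroup.zpowers c ⊔ H = ⊤ →
      ∀ g : G, g ∈ H ∨ c * g ∈ H := by
    intro H hsup g
    have hmem : g ∈ ((Subgroup.zpowers c : Subgroup G) : Set G) * (H : Set G) := by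
      rw [← Subgroup.normal_mul, hsup]; trivial
    obtain ⟨a, ha, b, hb, hab⟩ := hmem
    replace hab : a * b = g := hab
    rcases hzp a ha with h1 | h1
    · left; rw [← hab, h1, one_mul]; exact hb
    · right; rw [← hab, h1, ← mul_assoc, hcsq, one_mul]; exact hb
  have hnotboth : ∀ (H : Subgroup G), Subgroup.zpowers c ⊓ H = ⊥ →
      ∀ g : G, g ∈ H → c * g ∈ H → False := by
    intro H hinf g hg hcg
    have hcH : c ∈ H := by
      have := mul_mem hcg (inv_mem hg)
      simpa using this
    have : c ∈ Subgroup.zpowers c ⊓ H := ⟨Subgroup.mem_zpowers c, hcH⟩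
    rw [hinf] at this
    exact hc1 (Subgroup.mem_bot.mp this)
  have hcover : ∀ x y : Ω, (∃ g ∈ Gbar, g • x = y) ∨ (∃ g ∈ Gbar, g • x = c • y) := by
    intro x y
    obtain ⟨g, hg⟩ := htrans.exists_smul_eq x y
    rcases hdec Gbar hGbar₂ g with h | h
    · exact Or.inl ⟨g, h, hg⟩
    · exact Or.inr ⟨c * g, h, by rw [mul_smul, hg]⟩
  have hnotfix : ∀ x : Ω, ¬ ∃ g ∈ Gbar, g • x = c • x := by
    rintro x ⟨g₁, hg₁, hgx⟩
    have htr : ∀ y : Ω, ∃ g ∈ Gbar, g • x = y := by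
      intro y
      rcases hcover x y with h | ⟨g, hg, hgy⟩
      · exact h
      · refine ⟨g * g₁, mul_mem hg hg₁, ?_⟩
        calc (g * g₁) • x = g • (g₁ • x) := mul_smul ..
          _ = g • (c • x) := by rw [hgx]
          _ = (g * c) • x := (mul_smul ..).symm
          _ = (c * g) • x := by rw [hcomm]
          _ = c • (g • x) := mul_smul ..
          _ = c • (c • y) := by rw [hgy]
          _ = (c * c) • y := (mul_smul ..).symm
          _ = y := by rw [hcsq, one_smul]
    have hsub : Subsingleton (MulAction.orbitRel.Quotient Gbar Ω) := by
      constructor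
      intro a b
      induction a using Quotient.inductionOn' with
      | h a =>
        induction b using Quotient.inductionOn' with
        | h b =>
          apply Quotient.sound'
          obtain ⟨ga, hga, hax⟩ := htr a
          obtain ⟨gb, hgb, hbx⟩ := htr b
          rw [MulAction.orbitRel_apply]
          refine ⟨⟨ga * gb⁻¹, mul_mem hga (inv_mem hgb)⟩, ?_⟩
          show (ga * gb⁻¹) • b = a
          rw [mul_smul, ← hbx, inv_smul_smul, hax]
    haveI := hsub
    haveI : Finite (MulAction.orbitRel.Quotient Gbar Ω) := Finite.of_subsingleton
    have : Nat.card (MulAction.orbitRel.Quotient Gbar Ω) ≤ 1 :=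
      Finite.card_le_one_iff_subsingleton.mpr hsub
    omega
  have key : ∀ x : Ω, ∃ g : G, g ∈ Gbar ∧ g ∉ K ∧ g • x = x := by
    intro x
    obtain ⟨k, hk, hkx⟩ := hKtrans x (c • x)
    have hknG : k ∉ Gbar := fun h => hnotfix x ⟨k, h, hkx⟩
    have hckG : c * k ∈ Gbar := (hdec Gbar hGbar₂ k).resolve_left hknG
    have hcknK : c * k ∉ K := fun h => hnotboth K hK₁ k hk h
    refine ⟨c * k, hckG, hcknK, ?_⟩
    rw [mul_smul, hkx, ← mul_smul, hcsq, one_smul]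
  have hprod : ∀ (H : Subgroup G), Subgroup.zpowers c ⊔ H = ⊤ →
      ∀ a b : G, a ∉ H → b ∉ H → a * b ∈ H := by
    intro H hsup a b ha hb
    have ha' := (hdec H hsup a).resolve_left ha
    have hb' := (hdec H hsup b).resolve_left hb
    have hmem := mul_mem ha' hb'
    have he : (c * a) * (c * b) = a * b := by
      have := hcomm a
      calc (c * a) * (c * b) = c * (a * c) * b := by group
        _ = c * (c * a) * b := by rw [← this]
        _ = (c * c) * (a * b) := by group
        _ = a * b := by rw [hcsq, one_mul]
    rwa [he] at hmem
  have horbH : ∀ x y : Ω, (∃ g ∈ Gbar, g • x = y) → ∃ h ∈ K ⊓ Gbar, h • x = y := by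
    rintro x y ⟨g, hg, hgy⟩
    by_cases hgK : g ∈ K
    · exact ⟨g, ⟨hgK, hg⟩, hgy⟩
    · obtain ⟨g₀, hg₀G, hg₀K, hg₀x⟩ := key x
      refine ⟨g * g₀, ⟨hprod K hK₂ g g₀ hgK hg₀K, mul_mem hg hg₀G⟩, ?_⟩
      rw [mul_smul, hg₀x, hgy]
  -- nonempty Ω
  have hΩ : Nonempty Ω := by
    have h0 : Nat.card (MulAction.orbitRel.Quotient Gbar Ω) ≠ 0 := by rw [horb]; omega
    obtain ⟨⟨q⟩, -⟩ := Nat.card_ne_zero.mp h0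
    exact ⟨q.out⟩
  obtain ⟨x⟩ := hΩ
  obtain ⟨g₀, hg₀G, hg₀K, -⟩ := key x
  obtain ⟨k₀, hk₀, hk₀x⟩ := hKtrans x (c • x)
  have hk₀G : k₀ ∉ Gbar := fun h => hnotfix x ⟨k₀, h, hk₀x⟩
  refine ⟨?_, ?_, ?_, ?_⟩
  · -- relindex in K
    rw [Subgroup.relIndex, Subgroup.index_eq_two_iff]
    refine ⟨⟨k₀, hk₀⟩, ?_⟩
    rintro ⟨b, hb⟩
    simp only [Subgroup.mem_subgroupOf, Subgroup.mem_inf, MulMemClass.mk_mul_mk]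
    by_cases hbG : b ∈ Gbar
    · refine Or.inr ⟨⟨hb, hbG⟩, ?_⟩
      rintro ⟨-, hbk⟩
      exact hk₀G (by simpa using mul_mem (inv_mem hbG) hbk)
    · refine Or.inl ⟨⟨mul_mem hb hk₀, hprod Gbar hGbar₂ b k₀ hbG hk₀G⟩, ?_⟩
      rintro ⟨-, hbG'⟩
      exact hbG hbG'
  · -- relindex in Gbar
    rw [Subgroup.relIndex, Subgroup.index_eq_two_iff]
    refine ⟨⟨g₀, hg₀G⟩, ?_⟩
    rintro ⟨b, hb⟩
    simp only [Subgroup.mem_subgroupOf, Subgroup.mem_inf, MulMemClass.mk_mul_mk]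
    by_cases hbK : b ∈ K
    · refine Or.inr ⟨⟨hbK, hb⟩, ?_⟩
      rintro ⟨hbg, -⟩
      exact hg₀K (by simpa using mul_mem (inv_mem hbK) hbg)
    · refine Or.inl ⟨⟨hprod K hK₂ b g₀ hbK hg₀K, mul_mem hb hg₀G⟩, ?_⟩
      rintro ⟨hbK', -⟩
      exact hbK hbK'
  · -- orbit count
    have hsetoid : MulAction.orbitRel ↥(K ⊓ Gbar) Ω = MulAction.orbitRel ↥Gbar Ω := by
      apply Setoid.ext
      intro a b
      rw [MulAction.orbitRel_apply, MulAction.orbitRel_apply]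
      constructor
      · rintro ⟨⟨g, hgK, hgG⟩, hg⟩
        exact ⟨⟨g, hgG⟩, hg⟩
      · rintro ⟨⟨g, hgG⟩, hg⟩
        obtain ⟨h, hh, hhb⟩ := horbH b a ⟨g, hgG, hg⟩
        exact ⟨⟨h, hh⟩, hhb⟩
    show Nat.card (Quotient (MulAction.orbitRel ↥(K ⊓ Gbar) Ω)) = 2
    rw [hsetoid]
    exact horb
  · intro x y
    rcases hcover x y with h | h
    · obtain ⟨h', hh', he⟩ := horbH x y h
      exact ⟨h', hh', Or.inl he⟩
    · obtain ⟨h', hh', he⟩ := horbH x (c • y) h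
      exact ⟨h', hh', Or.inr he⟩
end

section
/- Let X be a connected simple graph and let f : V → V → ZMod 2 be a symmetric function on adjacent pairs. Then the voltage of every closed walk W equals the parity of the length of W if and only if there exists g : V → ZMod 2 such that f u v = g u + g v + 1 for every edge {u,v}. -/
open SimpleGraph

lemma aux_tele {V : Type*} {X : SimpleGraph V} (g : V → ZMod 2) {a b : V}
    (p : X.Walk a b) :
    (p.darts.map fun d => g d.toProd.1 + g d.toProd.2 + 1).sum
      = g a + g b + (p.length : ZMod 2) := by
  induction p with
  | nil => simp [CharTwo.add_self_eq_zero]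
  | cons h p ih =>
    simp only [SimpleGraph.Walk.darts_cons, List.map_cons, List.sum_cons, ih,
      SimpleGraph.Walk.length_cons, Nat.cast_succ]
    ring_nf
    simp [show (2:ZMod 2)=0 from rfl]

theorem stmt_15 {V : Type*} (X : SimpleGraph V) (hconn : X.Connected)
    (f : V → V → ZMod 2) (hsymm : ∀ u v, X.Adj u v → f u v = f v u) :
    (∀ (u : V) (W : X.Walk u u),
        (W.darts.map fun d => f d.toProd.1 d.toProd.2).sum = (W.length : ZMod 2)) ↔
    ∃ g : V → ZMod 2, ∀ u v, X.Adj u v → f u v = g u + g v + 1 := by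
  constructor
  · intro hvolt
    have hne : Nonempty V := hconn.nonempty
    obtain ⟨v₀⟩ := hne
    have walks : ∀ u, X.Walk v₀ u := fun u => (hconn v₀ u).some
    set g : V → ZMod 2 := fun u =>
      ((walks u).darts.map fun d => f d.toProd.1 d.toProd.2).sum + ((walks u).length : ZMod 2)
      with hg
    refine ⟨g, fun u v huv => ?_⟩
    have W : X.Walk v₀ v₀ := (walks u).append ((SimpleGraph.Walk.cons huv SimpleGraph.Walk.nil).append (walks v).reverse)
    have hW := hvolt v₀ ((walks u).append ((SimpleGraph.Walk.cons huv SimpleGraph.Walk.nil).append (walks v).reverse))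
    have hrev : (((walks v).reverse.darts).map fun d => f d.toProd.1 d.toProd.2).sum
        = (((walks v).darts).map fun d => f d.toProd.1 d.toProd.2).sum := by
      rw [SimpleGraph.Walk.darts_reverse, List.map_reverse, List.sum_reverse, List.map_map]
      congr 1
      apply List.map_congr_left
      intro d hd
      have : X.Adj d.toProd.1 d.toProd.2 := d.adj
      simp [SimpleGraph.Dart.symm, hsymm _ _ this]
    simp [SimpleGraph.Walk.darts_append, SimpleGraph.Walk.length_append, hrev] at hW
    have h2 : (2 : ZMod 2) = 0 := by decide
    have hrev' : (List.map ((fun d => f d.toProd.1 d.toProd.2) ∘ SimpleGraph.Dart.symm) (walks v).darts).reverse.sum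
        = (List.map (fun d => f d.toProd.1 d.toProd.2) (walks v).darts).sum := by
      rw [List.sum_reverse]
      congr 1
      apply List.map_congr_left
      intro d hd
      simpa using (hsymm _ _ d.adj).symm
    rw [List.sum_reverse] at hrev'
    rw [hrev'] at hW
    simp only [hg]
    set Su := (List.map (fun d => f d.toProd.1 d.toProd.2) (walks u).darts).sum with hSu
    set Sv := (List.map (fun d => f d.toProd.1 d.toProd.2) (walks v).darts).sum with hSv
    linear_combination hW - Su * h2 - Sv * h2
  · rintro ⟨g, hgf⟩ u W
    have : (W.darts.map fun d => f d.toProd.1 d.toProd.2).sum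
        = (W.darts.map fun d => g d.toProd.1 + g d.toProd.2 + 1).sum := by
      congr 1
      apply List.map_congr_left
      intro d hd
      exact hgf _ _ d.adj
    rw [this, aux_tele]
    rw [CharTwo.add_self_eq_zero, zero_add]
end
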